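/- For any suitably summable sequences a, b: ℤ → ℝ and Δx > 0, one has ⟨D₊D₋(a), D(ab)⟩ = -(1/Δx²) ⟨D₊(b), a·𝒮⁺a⟩ + (1/Δx²) ⟨D(b), 𝒮⁻a·𝒮⁺a⟩. -/

import Mathlib

noncomputable section
def Dp (Δx : ℝ) (a : ℤ → ℝ) : ℤ → ℝ := fun j => (a (j + 1) - a j) / Δx
def Dm (Δx : ℝ) (a : ℤ → ℝ) : ℤ → ℝ := fun j => (a j - a (j - 1)) / Δx
def Dc (Δx : ℝ) (a : ℤ → ℝ) : ℤ → ℝ := fun j => (a (j + 1) - a (j - 1)) / (2 * Δx)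
def ip (Δx : ℝ) (u v : ℤ → ℝ) : ℝ := Δx * ∑' j : ℤ, u j * v j

private lemma tshift1 (f g : ℤ → ℝ) (h : ∀ j, f j = g (j + 1)) : ∑' j, f j = ∑' j, g j := by
  rw [funext h]
  simpa using (Equiv.addRight (1:ℤ)).tsum_eq g

private lemma tshiftm1 (f g : ℤ → ℝ) (h : ∀ j, f j = g (j - 1)) : ∑' j, f j = ∑' j, g j := by
  rw [funext h]
  simpa using (Equiv.subRight (1:ℤ)).tsum_eq g

private lemma tsum_comb (f1 f2 f3 f4 f5 f6 : ℤ → ℝ) (h1 : Summable f1) (h2 : Summable f2)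
    (h3 : Summable f3) (h4 : Summable f4) (h5 : Summable f5) (h6 : Summable f6) :
    ∑' j, (f1 j - f2 j - 2 * f3 j + 2 * f4 j + f5 j - f6 j)
      = (∑' j, f1 j) - (∑' j, f2 j) - 2 * (∑' j, f3 j) + 2 * (∑' j, f4 j)
        + (∑' j, f5 j) - (∑' j, f6 j) := by
  have H := ((((h1.hasSum.sub h2.hasSum).sub (h3.hasSum.mul_left 2)).add
      (h4.hasSum.mul_left 2)).add h5.hasSum).sub h6.hasSum
  simpa using H.tsum_eq

private lemma tsum_sub' (f1 f2 : ℤ → ℝ) (h1 : Summable f1) (h2 : Summable f2) :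
    ∑' j, (f1 j - f2 j) = (∑' j, f1 j) - (∑' j, f2 j) := Summable.tsum_sub h1 h2

private lemma summable_shift_sq (a : ℤ → ℝ) (ha : Summable fun j : ℤ => (a j) ^ 2) (s : ℤ) :
    Summable fun j : ℤ => (a (j + s)) ^ 2 := by
  have := ((Equiv.addRight s).summable_iff (f := fun j : ℤ => (a j) ^ 2)).2 ha
  exact this

private lemma summable_mono (a b : ℤ → ℝ) (ha : Summable fun j : ℤ => (a j) ^ 2)
    (hb : Summable fun j : ℤ => (b j) ^ 2) (s t u : ℤ) :
    Summable fun j : ℤ => a (j + s) * a (j + t) * b (j + u) := by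
  set C := Real.sqrt (∑' i, (b i) ^ 2) with hC
  have hC0 : 0 ≤ C := Real.sqrt_nonneg _
  have hbd : ∀ j : ℤ, |b j| ≤ C := by
    intro j
    rw [← Real.sqrt_sq_eq_abs]
    exact Real.sqrt_le_sqrt (Summable.le_tsum hb j fun i _ => sq_nonneg _)
  have hg : Summable fun j : ℤ => C * ((a (j + s)) ^ 2 + (a (j + t)) ^ 2) :=
    ((summable_shift_sq a ha s).add (summable_shift_sq a ha t)).mul_left C
  have habs : Summable fun j : ℤ => |a (j + s) * a (j + t) * b (j + u)| := by
    apply Summable.of_nonneg_of_le (fun j => abs_nonneg _) _ hg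
    intro j
    have h1 : |a (j + s) * a (j + t) * b (j + u)|
        = |a (j + s)| * |a (j + t)| * |b (j + u)| := by
      rw [abs_mul, abs_mul]
    rw [h1]
    have h2 : |a (j + s)| * |a (j + t)| ≤ (a (j + s)) ^ 2 + (a (j + t)) ^ 2 := by
      nlinarith [sq_nonneg (|a (j + s)| - |a (j + t)|), abs_nonneg (a (j + s)),
        abs_nonneg (a (j + t)), sq_abs (a (j + s)), sq_abs (a (j + t))]
    have h3 := hbd (j + u)
    have h4 : 0 ≤ |a (j + s)| * |a (j + t)| := by positivity
    nlinarith [abs_nonneg (b (j + u))]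
  exact habs.of_abs

/-- `⟨D₊D₋(a), D(ab)⟩ = -(1/Δx²)⟨D₊(b), a·𝒮⁺a⟩ + (1/Δx²)⟨D(b), 𝒮⁻a·𝒮⁺a⟩`. -/
theorem stmt12 (Δx : ℝ) (hΔx : 0 < Δx) (a b : ℤ → ℝ)
    (ha : Summable fun j : ℤ => (a j) ^ 2) (hb : Summable fun j : ℤ => (b j) ^ 2) :
    ip Δx (Dp Δx (Dm Δx a)) (Dc Δx (fun i => a i * b i))
      = -(1 / Δx ^ 2) * ip Δx (Dp Δx b) (fun j => a j * a (j + 1))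
        + (1 / Δx ^ 2) * ip Δx (Dc Δx b) (fun j => a (j - 1) * a (j + 1)) := by
  have hx : Δx ≠ 0 := ne_of_gt hΔx
  have hS : ∀ s t u : ℤ, Summable fun j : ℤ => a (j + s) * a (j + t) * b (j + u) :=
    summable_mono a b ha hb
  -- summability of the six LHS monomials
  have hs1 : Summable fun j : ℤ => a (j + 1) * a (j + 1) * b (j + 1) := hS 1 1 1
  have hs2 : Summable fun j : ℤ => a (j - 1) * a (j + 1) * b (j - 1) := by
    refine (hS (-1) 1 (-1)).congr fun j => ?_
    simp [← sub_eq_add_neg]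
  have hs3 : Summable fun j : ℤ => a j * a (j + 1) * b (j + 1) := by
    refine (hS 0 1 1).congr fun j => ?_
    simp
  have hs4 : Summable fun j : ℤ => a (j - 1) * a j * b (j - 1) := by
    refine (hS (-1) 0 (-1)).congr fun j => ?_
    simp [← sub_eq_add_neg]
  have hs5 : Summable fun j : ℤ => a (j - 1) * a (j + 1) * b (j + 1) := by
    refine (hS (-1) 1 1).congr fun j => ?_
    simp [← sub_eq_add_neg]
  have hs6 : Summable fun j : ℤ => a (j - 1) * a (j - 1) * b (j - 1) := by
    refine (hS (-1) (-1) (-1)).congr fun j => ?_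
    simp [← sub_eq_add_neg]
  have hs7 : Summable fun j : ℤ => a j * a (j + 1) * b j := by
    refine (hS 0 1 0).congr fun j => ?_
    simp
  have hs8 : Summable fun j : ℤ => a (j - 1) * a (j + 1) * b (j - 1) := hs2
  -- normalized atoms
  set P0 : ℝ := ∑' j : ℤ, a j * a j * b j with hP0
  set P1 : ℝ := ∑' j : ℤ, a j * a (j + 1) * b j with hP1
  set P2 : ℝ := ∑' j : ℤ, a j * a (j + 2) * b j with hP2
  set Pm1 : ℝ := ∑' j : ℤ, a (j - 1) * a j * b j with hPm1
  set Pm2 : ℝ := ∑' j : ℤ, a (j - 2) * a j * b j with hPm2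
  -- shift identities
  have e1 : (∑' j : ℤ, a (j + 1) * a (j + 1) * b (j + 1)) = P0 :=
    tshift1 _ (fun j => a j * a j * b j) (fun j => rfl)
  have e2 : (∑' j : ℤ, a (j - 1) * a (j + 1) * b (j - 1)) = P2 := by
    refine tshiftm1 _ (fun j => a j * a (j + 2) * b j) fun j => ?_
    have : j - 1 + 2 = j + 1 := by ring
    simp [this]
  have e3 : (∑' j : ℤ, a j * a (j + 1) * b (j + 1)) = Pm1 := by
    refine tshift1 _ (fun j => a (j - 1) * a j * b j) fun j => ?_
    simp
  have e4 : (∑' j : ℤ, a (j - 1) * a j * b (j - 1)) = P1 := by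
    refine tshiftm1 _ (fun j => a j * a (j + 1) * b j) fun j => ?_
    have : j - 1 + 1 = j := by ring
    simp [this]
  have e5 : (∑' j : ℤ, a (j - 1) * a (j + 1) * b (j + 1)) = Pm2 := by
    refine tshift1 _ (fun j => a (j - 2) * a j * b j) fun j => ?_
    have : j + 1 - 2 = j - 1 := by ring
    simp [this]
  have e6 : (∑' j : ℤ, a (j - 1) * a (j - 1) * b (j - 1)) = P0 :=
    tshiftm1 _ (fun j => a j * a j * b j) (fun j => rfl)
  -- LHS
  have keyL : ip Δx (Dp Δx (Dm Δx a)) (Dc Δx (fun i => a i * b i))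
      = Δx * ((2 * Δx ^ 3)⁻¹ * (P0 - P2 - 2 * Pm1 + 2 * P1 + Pm2 - P0)) := by
    rw [ip]
    congr 1
    have step1 : (∑' j : ℤ, Dp Δx (Dm Δx a) j * Dc Δx (fun i => a i * b i) j)
        = ∑' j : ℤ, (2 * Δx ^ 3)⁻¹ *
          (a (j + 1) * a (j + 1) * b (j + 1) - a (j - 1) * a (j + 1) * b (j - 1)
            - 2 * (a j * a (j + 1) * b (j + 1)) + 2 * (a (j - 1) * a j * b (j - 1))
            + a (j - 1) * a (j + 1) * b (j + 1) - a (j - 1) * a (j - 1) * b (j - 1)) := by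
      refine tsum_congr fun j => ?_
      simp only [Dp, Dm, Dc]
      field_simp
      ring
    rw [step1, tsum_mul_left]
    congr 1
    rw [tsum_comb _ _ _ _ _ _ hs1 hs2 hs3 hs4 hs5 hs6, e1, e2, e3, e4, e5, e6]
  -- RHS first term
  have keyR1 : ip Δx (Dp Δx b) (fun j => a j * a (j + 1)) = Δx * (Δx⁻¹ * (Pm1 - P1)) := by
    rw [ip]
    congr 1
    have step1 : (∑' j : ℤ, Dp Δx b j * (a j * a (j + 1)))
        = ∑' j : ℤ, Δx⁻¹ * (a j * a (j + 1) * b (j + 1) - a j * a (j + 1) * b j) := by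
      refine tsum_congr fun j => ?_
      simp only [Dp]
      field_simp
    rw [step1, tsum_mul_left]
    congr 1
    rw [tsum_sub' _ _ hs3 hs7, e3]
  -- RHS second term
  have keyR2 : ip Δx (Dc Δx b) (fun j => a (j - 1) * a (j + 1))
      = Δx * ((2 * Δx)⁻¹ * (Pm2 - P2)) := by
    rw [ip]
    congr 1
    have step1 : (∑' j : ℤ, Dc Δx b j * (a (j - 1) * a (j + 1)))
        = ∑' j : ℤ, (2 * Δx)⁻¹ *
          (a (j - 1) * a (j + 1) * b (j + 1) - a (j - 1) * a (j + 1) * b (j - 1)) := by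
      refine tsum_congr fun j => ?_
      simp only [Dc]
      field_simp
    rw [step1, tsum_mul_left]
    congr 1
    rw [tsum_sub' _ _ hs5 hs8, e5, e2]
  rw [keyL, keyR1, keyR2]
  field_simp
  ring
end
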